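/- Let n = m be even with n ≥ 8, and consider the Probabilistic Serial mechanism where agent 2 reports o_1 ≻ o_2 ≻ ⋯ ≻ o_n, each agent i ∈ {3,…,n} reports o_2 ≻ o_3 ≻ ⋯ ≻ o_n ≻ o_1, and agent 1 reports o_2 ≻ o_3 ≻ ⋯ ≻ o_{n/2−1} ≻ o_1 ≻ o_{n/2} ≻ ⋯ ≻ o_n. Then agent 1 receives exactly 1/(n−1) of each of the items o_2,…,o_{n/2−1} and exactly (n+2)/(4(n−1)) of item o_1. In particular, if agent 1's utilities are dichotomous with interest set O̅ = {o_1,…,o_{n/2−1}}, this (untruthful) report yields utility u'_1 = 3(n−2)/(4(n−1)), whereas its truthful utility is u_1 = 1/2, so u'_1/u_1 = 3(n−2)/(2(n−1)). -/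

import Mathlib

open MeasureTheory

/-- An execution of the Probabilistic Serial eating process with `n` agents and `m` items
(each of supply 1).  Agent `i` reports the strict preference order encoded by the injective
rank function `rk i` (`rk i j < rk i j'` means agent `i` ranks item `j` above item `j'`).
`active i t` tells whether agent `i` participates (eats at rate 1) at time `t`; the normal
scenario is `active = fun _ _ => True`, pausing/removing agents is modelled by making them
inactive.  `eats i t = some j` means agent `i` is eating item `j` at time `t`, and `rem j t`
is the remaining supply of item `j` at time `t`: it equals `1` minus the total time agents
have spent eating `j` during `(0, t]`.  An active agent always eats its most preferred item
among those with positive remaining supply. -/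
structure PSExec (n m : ℕ) (rk : Fin n → Fin m → ℕ) (active : Fin n → ℝ → Prop) where
  eats : Fin n → ℝ → Option (Fin m)
  rem : Fin m → ℝ → ℝ
  meas : ∀ i j, MeasurableSet {t : ℝ | eats i t = some j}
  rem_def : ∀ j, ∀ t : ℝ, 0 ≤ t →
    rem j t = 1 - ∑ i : Fin n,
      (volume {s : ℝ | 0 < s ∧ s ≤ t ∧ eats i s = some j}).toReal
  eats_iff : ∀ i, ∀ t : ℝ, 0 ≤ t → active i t → ∀ j,
    (eats i t = some j ↔ 0 < rem j t ∧ ∀ j', 0 < rem j' t → rk i j ≤ rk i j')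
  eats_none : ∀ i, ∀ t : ℝ, ¬ active i t → eats i t = none

namespace PSExec

variable {n m : ℕ} {rk : Fin n → Fin m → ℕ} {active : Fin n → ℝ → Prop}

/-- The total amount of item `j` eaten by agent `i` (the allocation `x i j`). -/
noncomputable def alloc (E : PSExec n m rk active) (i : Fin n) (j : Fin m) : ℝ :=
  (volume {s : ℝ | 0 < s ∧ E.eats i s = some j}).toReal

/-- The expected utility of agent `i` with cardinal utilities `a`. -/
noncomputable def utility (E : PSExec n m rk active) (a : Fin m → ℝ) (i : Fin n) : ℝ :=
  ∑ j, a j * E.alloc i j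

/-- Item `j` is exhausted exactly at time `τ`. -/
def exhaustedAt (E : PSExec n m rk active) (j : Fin m) (τ : ℝ) : Prop :=
  0 < τ ∧ E.rem j τ = 0 ∧ ∀ s : ℝ, 0 ≤ s → s < τ → 0 < E.rem j s

/-- Agent `i` is eating item `j` at the moment `τ`, in the left-limit sense (this is the
sense used for "eating an item at the moment of its exhaustion"). -/
def eatsAt (E : PSExec n m rk active) (i : Fin n) (j : Fin m) (τ : ℝ) : Prop :=
  ∃ δ > 0, ∀ s : ℝ, τ - δ < s → s < τ → E.eats i s = some j

/-- `T` is the exact moment at which the last item of `Obar` is exhausted. -/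
def exhaustTime (E : PSExec n m rk active) (Obar : Finset (Fin m)) (T : ℝ) : Prop :=
  (∀ j ∈ Obar, E.rem j T = 0) ∧ ∀ s : ℝ, 0 ≤ s → s < T → ∃ j ∈ Obar, 0 < E.rem j s

end PSExec

/-- Dichotomous cardinal utilities with interest set `Obar`. -/
def dicho {m : ℕ} (Obar : Finset (Fin m)) : Fin m → ℝ :=
  fun j => if j ∈ Obar then 1 else 0

namespace PSAux

variable {n m : ℕ} {rk : Fin n → Fin m → ℕ}

/-- measure of time agent `i` spends on `j` in `(a,b]`. -/
noncomputable def ms (E : PSExec n m rk (fun _ _ => True)) (i : Fin n) (j : Fin m)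
    (a b : ℝ) : ENNReal :=
  volume {s : ℝ | a < s ∧ s ≤ b ∧ E.eats i s = some j}

variable (E : PSExec n m rk (fun _ _ => True))

lemma eats_iff' (i : Fin n) (t : ℝ) (ht : 0 ≤ t) (j : Fin m) :
    E.eats i t = some j ↔ 0 < E.rem j t ∧ ∀ j', 0 < E.rem j' t → rk i j ≤ rk i j' :=
  E.eats_iff i t ht trivial j

lemma ms_set_eq (i : Fin n) (j : Fin m) (a b : ℝ) :
    {s : ℝ | a < s ∧ s ≤ b ∧ E.eats i s = some j}
      = Set.Ioc a b ∩ {s : ℝ | E.eats i s = some j} := by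
  ext s; simp [Set.mem_Ioc, and_assoc]

lemma ms_meas (i : Fin n) (j : Fin m) (a b : ℝ) :
    MeasurableSet {s : ℝ | a < s ∧ s ≤ b ∧ E.eats i s = some j} := by
  rw [ms_set_eq]; exact measurableSet_Ioc.inter (E.meas i j)

lemma ms_le (i : Fin n) (j : Fin m) (a b : ℝ) :
    ms E i j a b ≤ ENNReal.ofReal (b - a) := by
  rw [ms, ms_set_eq, ← Real.volume_Ioc]
  exact measure_mono Set.inter_subset_left

lemma ms_ne_top (i : Fin n) (j : Fin m) (a b : ℝ) : ms E i j a b ≠ ⊤ :=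
  fun h => by simpa [h] using ms_le E i j a b

lemma ms_toReal_le (i : Fin n) (j : Fin m) {a b : ℝ} (hab : a ≤ b) :
    (ms E i j a b).toReal ≤ b - a :=
  ENNReal.toReal_le_of_le_ofReal (by linarith) (ms_le E i j a b)

lemma ms_toReal_nonneg (i : Fin n) (j : Fin m) (a b : ℝ) :
    0 ≤ (ms E i j a b).toReal := ENNReal.toReal_nonneg

lemma ms_add (i : Fin n) (j : Fin m) {a b c : ℝ} (hab : a ≤ b) (hbc : b ≤ c) :
    ms E i j a c = ms E i j a b + ms E i j b c := by
  rw [ms, ms, ms, ms_set_eq, ms_set_eq, ms_set_eq, ← measure_union _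
      (measurableSet_Ioc.inter (E.meas i j))]
  · rw [← Set.union_inter_distrib_right, Set.Ioc_union_Ioc_eq_Ioc hab hbc]
  · exact (Set.Ioc_disjoint_Ioc_of_le le_rfl).mono Set.inter_subset_left Set.inter_subset_left

lemma ms_full (i : Fin n) (j : Fin m) {a b : ℝ} (hab : a ≤ b)
    (h : ∀ s, a < s → s < b → E.eats i s = some j) :
    (ms E i j a b).toReal = b - a := by
  have h1 : Set.Ioo a b ⊆ {s : ℝ | a < s ∧ s ≤ b ∧ E.eats i s = some j} := by
    intro s hs; exact ⟨hs.1, le_of_lt hs.2, h s hs.1 hs.2⟩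
  have h2 : {s : ℝ | a < s ∧ s ≤ b ∧ E.eats i s = some j} ⊆ Set.Ioc a b := by
    intro s hs; exact ⟨hs.1, hs.2.1⟩
  have hub : ms E i j a b ≤ ENNReal.ofReal (b - a) := ms_le E i j a b
  have hlb : ENNReal.ofReal (b - a) ≤ ms E i j a b := by
    rw [← Real.volume_Ioo]; exact measure_mono h1
  rw [le_antisymm hub hlb, ENNReal.toReal_ofReal (by linarith)]

lemma ms_zero (i : Fin n) (j : Fin m) {a b : ℝ}
    (h : ∀ s, a < s → s < b → E.eats i s ≠ some j) :
    (ms E i j a b).toReal = 0 := by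
  have h2 : {s : ℝ | a < s ∧ s ≤ b ∧ E.eats i s = some j} ⊆ {b} := by
    intro s hs
    rcases lt_or_eq_of_le hs.2.1 with h' | h'
    · exact absurd hs.2.2 (h s hs.1 h')
    · exact h'
  have h3 : ms E i j a b ≤ volume ({b} : Set ℝ) := measure_mono h2
  simp only [Real.volume_singleton, nonpos_iff_eq_zero] at h3
  simp [ms] at h3 ⊢
  simp [h3]

lemma rem_sub (j : Fin m) {t0 t : ℝ} (h0 : 0 ≤ t0) (ht : t0 ≤ t) :
    E.rem j t = E.rem j t0 - ∑ i : Fin n, (ms E i j t0 t).toReal := by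
  have e0 := E.rem_def j t0 h0
  have e1 := E.rem_def j t (le_trans h0 ht)
  have key : ∀ i : Fin n, (ms E i j 0 t).toReal = (ms E i j 0 t0).toReal + (ms E i j t0 t).toReal := by
    intro i
    rw [ms_add E i j h0 ht, ENNReal.toReal_add (ms_ne_top E i j 0 t0) (ms_ne_top E i j t0 t)]
  have e0' : E.rem j t0 = 1 - ∑ i : Fin n, (ms E i j 0 t0).toReal := e0
  have e1' : E.rem j t = 1 - ∑ i : Fin n, (ms E i j 0 t).toReal := e1
  rw [e0', e1']
  rw [Finset.sum_congr rfl (fun i _ => key i), Finset.sum_add_distrib]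
  ring

lemma rem_antitone (j : Fin m) {t0 t : ℝ} (h0 : 0 ≤ t0) (ht : t0 ≤ t) :
    E.rem j t ≤ E.rem j t0 := by
  rw [rem_sub E j h0 ht]
  have : 0 ≤ ∑ i : Fin n, (ms E i j t0 t).toReal :=
    Finset.sum_nonneg fun i _ => ENNReal.toReal_nonneg
  linarith

lemma rem_lip (j : Fin m) {t0 t : ℝ} (h0 : 0 ≤ t0) (ht : t0 ≤ t) :
    E.rem j t0 - (n : ℝ) * (t - t0) ≤ E.rem j t := by
  rw [rem_sub E j h0 ht]
  have : ∑ i : Fin n, (ms E i j t0 t).toReal ≤ (n : ℝ) * (t - t0) := by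
    calc ∑ i : Fin n, (ms E i j t0 t).toReal ≤ ∑ _i : Fin n, (t - t0) :=
          Finset.sum_le_sum fun i _ => ms_toReal_le E i j ht
      _ = (n : ℝ) * (t - t0) := by simp [mul_comm]; ring
  linarith

lemma rem_zero (j : Fin m) : E.rem j 0 = 1 := by
  have := E.rem_def j 0 le_rfl
  have h : ∀ i : Fin n, (volume {s : ℝ | 0 < s ∧ s ≤ (0:ℝ) ∧ E.eats i s = some j}).toReal = 0 := by
    intro i
    have : {s : ℝ | 0 < s ∧ s ≤ (0:ℝ) ∧ E.eats i s = some j} = ∅ := by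
      ext s; simp only [Set.mem_setOf_eq, Set.mem_empty_iff_false, iff_false]
      rintro ⟨h1, h2, -⟩; linarith
    simp [this]
  rw [this, Finset.sum_congr rfl (fun i _ => h i)]
  simp

lemma rem_eq_of_pinned (j : Fin m) (S : Finset (Fin n)) {t0 t : ℝ} (h0 : 0 ≤ t0) (ht : t0 ≤ t)
    (h1 : ∀ i ∈ S, ∀ s, t0 < s → s < t → E.eats i s = some j)
    (h2 : ∀ i ∉ S, ∀ s, t0 < s → s < t → E.eats i s ≠ some j) :
    E.rem j t = E.rem j t0 - (S.card : ℝ) * (t - t0) := by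
  rw [rem_sub E j h0 ht]
  have : ∑ i : Fin n, (ms E i j t0 t).toReal
      = ∑ i : Fin n, (if i ∈ S then t - t0 else 0) := by
    refine Finset.sum_congr rfl fun i _ => ?_
    by_cases hi : i ∈ S
    · simp only [hi, if_true]; exact ms_full E i j ht (h1 i hi)
    · simp only [hi, if_false]; exact ms_zero E i j (h2 i hi)
  rw [this, Finset.sum_ite_mem, Finset.univ_inter, Finset.sum_const, nsmul_eq_mul]

lemma exists_pos (j0 : Fin m) (t : ℝ) (ht : 0 ≤ t) (hm : 0 < m)
    (hlt : (n : ℝ) * t < (m : ℝ) - 1) :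
    ∃ j : Fin m, j ≠ j0 ∧ 0 < E.rem j t := by
  by_contra hcon
  push_neg at hcon
  have hsum_le : ∑ j ∈ Finset.univ.erase j0, E.rem j t ≤ 0 :=
    Finset.sum_nonpos fun j hj => hcon j (Finset.ne_of_mem_erase hj)
  have hper : ∀ i : Fin n, ∑ j ∈ Finset.univ.erase j0, (ms E i j 0 t).toReal ≤ t := by
    intro i
    have hd : (↑(Finset.univ.erase j0) : Set (Fin m)).PairwiseDisjoint
        (fun j => {s : ℝ | 0 < s ∧ s ≤ t ∧ E.eats i s = some j}) := by
      intro a _ b _ hab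
      refine Set.disjoint_left.mpr ?_
      rintro s ⟨_, _, hsa⟩ ⟨_, _, hsb⟩
      exact hab (by rw [hsa] at hsb; exact (Option.some_injective _ hsb))
    have hbu := measure_biUnion_finset (μ := volume) hd (fun j _ => ms_meas E i j 0 t)
    have hsub : (⋃ j ∈ Finset.univ.erase j0, {s : ℝ | 0 < s ∧ s ≤ t ∧ E.eats i s = some j})
        ⊆ Set.Ioc 0 t := by
      intro s hs
      simp only [Set.mem_iUnion] at hs
      obtain ⟨j, _, h1, h2, _⟩ := hs
      exact ⟨h1, h2⟩
    have hle : ∑ j ∈ Finset.univ.erase j0, ms E i j 0 t ≤ ENNReal.ofReal t := by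
      rw [show (∑ j ∈ Finset.univ.erase j0, ms E i j 0 t) = _ from hbu.symm]
      calc volume _ ≤ volume (Set.Ioc (0:ℝ) t) := measure_mono hsub
        _ = ENNReal.ofReal t := by rw [Real.volume_Ioc, sub_zero]
    calc ∑ j ∈ Finset.univ.erase j0, (ms E i j 0 t).toReal
        = (∑ j ∈ Finset.univ.erase j0, ms E i j 0 t).toReal :=
          (ENNReal.toReal_sum fun j _ => ms_ne_top E i j 0 t).symm
      _ ≤ t := ENNReal.toReal_le_of_le_ofReal ht hle
  have hcard : ((Finset.univ.erase j0).card : ℝ) = (m : ℝ) - 1 := by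
    rw [Finset.card_erase_of_mem (Finset.mem_univ j0), Finset.card_univ, Fintype.card_fin]
    rw [Nat.cast_sub hm]; simp
  have hval : ∑ j ∈ Finset.univ.erase j0, E.rem j t
      = ((m : ℝ) - 1) - ∑ i : Fin n, ∑ j ∈ Finset.univ.erase j0, (ms E i j 0 t).toReal := by
    rw [Finset.sum_comm]
    have : ∀ j ∈ Finset.univ.erase j0, E.rem j t = 1 - ∑ i : Fin n, (ms E i j 0 t).toReal :=
      fun j _ => E.rem_def j t ht
    rw [Finset.sum_congr rfl this, Finset.sum_sub_distrib, Finset.sum_const, nsmul_eq_mul,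
      mul_one, hcard]
  have hsum_ge : ((m : ℝ) - 1) - (n : ℝ) * t ≤ ∑ j ∈ Finset.univ.erase j0, E.rem j t := by
    rw [hval]
    have : ∑ i : Fin n, ∑ j ∈ Finset.univ.erase j0, (ms E i j 0 t).toReal
        ≤ ∑ _i : Fin n, t := Finset.sum_le_sum fun i _ => hper i
    simp only [Finset.sum_const, Finset.card_univ, Fintype.card_fin, nsmul_eq_mul] at this
    linarith
  linarith

lemma phase (t0 t1 : ℝ) (h0 : 0 ≤ t0) (h01 : t0 < t1)
    (e : Fin n → Option (Fin m)) (D Z : Fin m → Prop)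
    (hZ : ∀ j, Z j → E.rem j t0 ≤ 0)
    (hD : ∀ j, D j → 0 < E.rem j t0 ∧
      ((Finset.univ.filter (fun i => e i = some j)).card : ℝ) * (t1 - t0) ≤ E.rem j t0)
    (hDe : ∀ i j0, e i = some j0 → D j0 ∧ ∀ j', ¬ Z j' → rk i j0 ≤ rk i j')
    (hu : ∀ i, e i = none → ∀ s, t0 ≤ s → s < t1 → ∀ j, D j → E.eats i s ≠ some j) :
    (∀ s, t0 < s → s < t1 → ∀ i j0, e i = some j0 → E.eats i s = some j0) ∧
    (∀ j, D j → ∀ t, t0 ≤ t → t ≤ t1 →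
      E.rem j t = E.rem j t0
        - ((Finset.univ.filter (fun i => e i = some j)).card : ℝ) * (t - t0)) := by
  classical
  set c : Fin m → ℕ := fun j => (Finset.univ.filter (fun i => e i = some j)).card with hc
  -- key: rem formula given pinned eats on (t0, u)
  have key : ∀ u, t0 ≤ u → u ≤ t1 →
      (∀ s, t0 < s → s < u → ∀ i j0, e i = some j0 → E.eats i s = some j0) →
      ∀ j, D j → E.rem j u = E.rem j t0 - (c j : ℝ) * (u - t0) := by
    intro u hu0 hu1 hpin j hDj
    refine rem_eq_of_pinned E j (Finset.univ.filter (fun i => e i = some j)) h0 hu0 ?_ ?_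
    · intro i hi s hs1 hs2
      exact hpin s hs1 hs2 i j (Finset.mem_filter.mp hi).2
    · intro i hi s hs1 hs2
      simp only [Finset.mem_filter, Finset.mem_univ, true_and] at hi
      cases hei : e i with
      | none => exact hu i hei s (le_of_lt hs1) (lt_of_lt_of_le hs2 hu1) j hDj
      | some j' =>
        have := hpin s hs1 hs2 i j' hei
        rw [this]
        intro hcon
        exact hi (by rw [hei, Option.some_injective _ hcon])
  set A : Set ℝ := {u | u ∈ Set.Icc t0 t1 ∧
    ∀ s, t0 < s → s < u → ∀ i j0, e i = some j0 → E.eats i s = some j0} with hA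
  have hA0 : t0 ∈ A := ⟨⟨le_rfl, le_of_lt h01⟩, fun s hs1 hs2 => absurd hs2 (by linarith)⟩
  have hAne : A.Nonempty := ⟨t0, hA0⟩
  have hbdd : BddAbove A := ⟨t1, fun x hx => hx.1.2⟩
  set u := sSup A with husup
  have hut0 : t0 ≤ u := le_csSup hbdd hA0
  have hut1 : u ≤ t1 := csSup_le hAne (fun x hx => hx.1.2)
  have hpin : ∀ s, t0 < s → s < u → ∀ i j0, e i = some j0 → E.eats i s = some j0 := by
    intro s hs1 hs2 i j0 hij
    obtain ⟨v, hvA, hsv⟩ := exists_lt_of_lt_csSup hAne hs2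
    exact hvA.2 s hs1 hsv i j0 hij
  -- forward step: pinned eats hold pointwise slightly beyond u, if u < t1
  have step : u < t1 → ∀ s, u ≤ s → s < u + (t1 - u) / (n + 1) →
      ∀ i j0, e i = some j0 → E.eats i s = some j0 := by
    intro hult s hsu hse i j0 hij
    have hs0 : (0 : ℝ) ≤ s := le_trans (le_trans h0 hut0) hsu
    have hc1 : 1 ≤ c j0 := by
      rw [hc]
      exact Finset.card_pos.mpr ⟨i, Finset.mem_filter.mpr ⟨Finset.mem_univ i, hij⟩⟩
    have hDj0 := (hDe i j0 hij).1
    have hremu : t1 - u ≤ E.rem j0 u := by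
      have := key u hut0 hut1 hpin j0 hDj0
      have h2 := (hD j0 hDj0).2
      have : E.rem j0 u = E.rem j0 t0 - (c j0 : ℝ) * (u - t0) := this
      have hcc : (1 : ℝ) ≤ (c j0 : ℝ) := by exact_mod_cast hc1
      nlinarith
    have hrems : 0 < E.rem j0 s := by
      have hlip := rem_lip E j0 (le_trans h0 hut0) hsu
      have hn1 : (0:ℝ) < (n:ℝ) + 1 := by positivity
      have : (n : ℝ) * (s - u) < t1 - u := by
        have h1 : s - u < (t1 - u) / ((n:ℝ) + 1) := by linarith
        have h2 : ((n:ℝ)+1) * (s - u) < ((n:ℝ)+1) * ((t1 - u) / ((n:ℝ)+1)) :=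
          mul_lt_mul_of_pos_left h1 hn1
        rw [mul_div_cancel₀ _ (ne_of_gt hn1)] at h2
        nlinarith [sub_nonneg.mpr hsu, Nat.cast_nonneg (α := ℝ) n]
      linarith
    rw [eats_iff' E i s hs0 j0]
    refine ⟨hrems, fun j' hj' => ?_⟩
    by_cases hZj : Z j'
    · exfalso
      have := rem_antitone E j' h0 (le_trans hut0 hsu)
      have := hZ j' hZj
      linarith
    · exact (hDe i j0 hij).2 j' hZj
  have hu_eq : u = t1 := by
    by_contra hne
    have hult : lt_of_le_of_ne hut1 hne = lt_of_le_of_ne hut1 hne := rfl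
    have hult : u < t1 := lt_of_le_of_ne hut1 hne
    set ε := (t1 - u) / (n + 1) with hε
    have hεpos : 0 < ε := div_pos (by linarith) (by positivity)
    set v := min (u + ε) t1 with hv
    have hvu : u < v := lt_min (by linarith) hult
    have hvA : v ∈ A := by
      refine ⟨⟨by linarith [le_trans hut0 (le_of_lt hvu)], min_le_right _ _⟩, ?_⟩
      intro s hs1 hs2 i j0 hij
      rcases lt_or_ge s u with h | h
      · exact hpin s hs1 h i j0 hij
      · exact step hult s h (lt_of_lt_of_le hs2 (min_le_left _ _)) i j0 hij
    have := le_csSup hbdd hvA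
    linarith
  constructor
  · intro s hs1 hs2 i j0 hij
    exact hpin s hs1 (by rw [hu_eq]; exact hs2) i j0 hij
  · intro j hDj t ht0 ht1
    exact key t ht0 ht1 (fun s hs1 hs2 => hpin s hs1 (by rw [hu_eq]; exact lt_of_lt_of_le hs2 ht1)) j hDj

lemma covering {Δ : ℝ} (hΔ : 0 < Δ) (k : ℕ) (s : ℝ) (h1 : 0 < s) (h2 : s ≤ k * Δ) :
    ∃ k', 1 ≤ k' ∧ k' ≤ k ∧ ((k' - 1 : ℕ) : ℝ) * Δ < s ∧ s ≤ (k' : ℝ) * Δ := by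
  refine ⟨⌈s / Δ⌉₊, ?_, ?_, ?_, ?_⟩
  · exact Nat.one_le_iff_ne_zero.mpr (by
      intro h
      have := Nat.ceil_eq_zero.mp h
      have : s / Δ ≤ 0 := this
      have : 0 < s / Δ := div_pos h1 hΔ
      linarith)
  · exact Nat.ceil_le.mpr (by rw [div_le_iff₀ hΔ]; exact h2)
  · have hlt : (↑(⌈s / Δ⌉₊ - 1) : ℝ) < s / Δ := by
      have h0 : 1 ≤ ⌈s / Δ⌉₊ := Nat.one_le_iff_ne_zero.mpr (by
        intro h
        have : s / Δ ≤ 0 := Nat.ceil_eq_zero.mp h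
        have : 0 < s / Δ := div_pos h1 hΔ
        linarith)
      have : ⌈s / Δ⌉₊ - 1 < ⌈s / Δ⌉₊ := by omega
      exact_mod_cast Nat.lt_ceil.mp this
    calc ((⌈s / Δ⌉₊ - 1 : ℕ) : ℝ) * Δ < (s / Δ) * Δ := by
          exact mul_lt_mul_of_pos_right hlt hΔ
      _ = s := div_mul_cancel₀ s (ne_of_gt hΔ)
  · have := Nat.le_ceil (s / Δ)
    calc s = (s / Δ) * Δ := (div_mul_cancel₀ s (ne_of_gt hΔ)).symm
      _ ≤ (⌈s / Δ⌉₊ : ℝ) * Δ := mul_le_mul_of_nonneg_right this (le_of_lt hΔ)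

lemma alloc_eq (i : Fin n) (j : Fin m) {a b : ℝ} (hab : a ≤ b)
    (F : Set ℝ) (hF : F.Countable)
    (h1 : Set.Ioo a b \ F ⊆ {s : ℝ | 0 < s ∧ E.eats i s = some j})
    (h2 : {s : ℝ | 0 < s ∧ E.eats i s = some j} ⊆ Set.Ioo a b ∪ F) :
    E.alloc i j = b - a := by
  have hFz : volume F = 0 := hF.measure_zero _
  have hub : volume {s : ℝ | 0 < s ∧ E.eats i s = some j} ≤ ENNReal.ofReal (b - a) := by
    calc volume {s : ℝ | 0 < s ∧ E.eats i s = some j}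
        ≤ volume (Set.Ioo a b ∪ F) := measure_mono h2
      _ ≤ volume (Set.Ioo a b) + volume F := measure_union_le _ _
      _ = ENNReal.ofReal (b - a) := by rw [hFz, add_zero, Real.volume_Ioo]
  have hlb : ENNReal.ofReal (b - a) ≤ volume {s : ℝ | 0 < s ∧ E.eats i s = some j} := by
    calc ENNReal.ofReal (b - a) = volume (Set.Ioo a b) := (Real.volume_Ioo).symm
      _ = volume (Set.Ioo a b \ F) := (measure_diff_null hFz).symm
      _ ≤ _ := measure_mono h1
  rw [PSExec.alloc, le_antisymm hub hlb, ENNReal.toReal_ofReal (by linarith)]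

lemma alloc_zero (i : Fin n) (j : Fin m) (F : Set ℝ) (hF : F.Countable)
    (h2 : {s : ℝ | 0 < s ∧ E.eats i s = some j} ⊆ F) :
    E.alloc i j = 0 := by
  have hFz : volume F = 0 := hF.measure_zero _
  have hm : volume {s : ℝ | 0 < s ∧ E.eats i s = some j} ≤ volume F := measure_mono h2
  rw [hFz, nonpos_iff_eq_zero] at hm
  rw [PSExec.alloc, hm]
  simp

lemma card_val_eq {a : ℕ} (ha : a < n) :
    (Finset.univ.filter (fun i : Fin n => (i : ℕ) = a)).card = 1 := by
  rw [Finset.card_eq_one]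
  refine ⟨⟨a, ha⟩, ?_⟩
  ext i
  simp [Finset.mem_filter, Fin.ext_iff]

lemma card_val_le_one (hn2 : 2 ≤ n) :
    (Finset.univ.filter (fun i : Fin n => (i : ℕ) ≤ 1)).card = 2 := by
  have : (Finset.univ.filter (fun i : Fin n => (i : ℕ) ≤ 1))
      = {(⟨0, by omega⟩ : Fin n), ⟨1, by omega⟩} := by
    ext i
    simp only [Finset.mem_filter, Finset.mem_univ, true_and, Finset.mem_insert,
      Finset.mem_singleton, Fin.ext_iff]
    omega
  rw [this]
  rfl

lemma card_val_not_le_one (hn2 : 2 ≤ n) :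
    (Finset.univ.filter (fun i : Fin n => ¬ (i : ℕ) ≤ 1)).card = n - 2 := by
  have h := Finset.card_filter_add_card_filter_not
    (s := (Finset.univ : Finset (Fin n))) (p := fun i : Fin n => (i : ℕ) ≤ 1)
  rw [card_val_le_one hn2] at h
  simp only [Finset.card_univ, Fintype.card_fin] at h
  omega

lemma card_val_ne (hn2 : 2 ≤ n) {a : ℕ} (ha : a < n) :
    (Finset.univ.filter (fun i : Fin n => ¬ (i : ℕ) = a)).card = n - 1 := by
  have h := Finset.card_filter_add_card_filter_not
    (s := (Finset.univ : Finset (Fin n))) (p := fun i : Fin n => (i : ℕ) = a)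
  rw [card_val_eq ha] at h
  simp only [Finset.card_univ, Fintype.card_fin] at h
  omega

lemma utility_calc {n : ℕ} {rk2 : Fin n → Fin n → ℕ} {act : Fin n → ℝ → Prop} (hn : 8 ≤ n)
    (E2 : PSExec n n rk2 act) (i1 : Fin n) (A0 A1 : ℝ)
    (ha0 : ∀ j : Fin n, (j : ℕ) = 0 → E2.alloc i1 j = A0)
    (ha1 : ∀ j : Fin n, 1 ≤ (j : ℕ) → (j : ℕ) ≤ n / 2 - 2 → E2.alloc i1 j = A1) :
    E2.utility (dicho (Finset.univ.filter (fun j : Fin n => (j : ℕ) ≤ n / 2 - 2))) i1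
      = A0 + ((n / 2 - 2 : ℕ) : ℝ) * A1 := by
  classical
  set G : ℕ → ℝ := fun k => if k = 0 then A0 else if k ≤ n / 2 - 2 then A1 else 0 with hG
  have hsummand : ∀ j : Fin n,
      dicho (Finset.univ.filter (fun j : Fin n => (j : ℕ) ≤ n / 2 - 2)) j * E2.alloc i1 j
        = G (j : ℕ) := by
    intro j
    rw [dicho]
    simp only [Finset.mem_filter, Finset.mem_univ, true_and, hG]
    by_cases h0 : (j : ℕ) = 0
    · rw [if_pos (by omega), if_pos h0, one_mul, ha0 j h0]
    · by_cases hle : (j : ℕ) ≤ n / 2 - 2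
      · rw [if_pos hle, if_neg h0, if_pos hle, one_mul, ha1 j (by omega) hle]
      · rw [if_neg hle, if_neg h0, if_neg hle, zero_mul]
  rw [PSExec.utility, Finset.sum_congr rfl (fun j _ => hsummand j)]
  rw [Fin.sum_univ_eq_sum_range G n]
  have hsub : Finset.range (n / 2 - 1) ⊆ Finset.range n := by
    apply Finset.range_subset_range.mpr; omega
  rw [← Finset.sum_subset hsub (by
    intro k _ hk
    rw [Finset.mem_range, not_lt] at hk
    rw [hG]
    simp only
    rw [if_neg (by omega), if_neg (by omega)])]
  have hn21 : n / 2 - 1 = (n / 2 - 2) + 1 := by omega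
  rw [hn21, Finset.sum_range_succ']
  have hG0 : G 0 = A0 := by rw [hG]; simp
  have hGk : ∀ k ∈ Finset.range (n / 2 - 2), G (k + 1) = A1 := by
    intro k hk
    rw [Finset.mem_range] at hk
    rw [hG]
    simp only
    rw [if_neg (by omega), if_pos (by omega)]
  rw [hG0, Finset.sum_congr rfl hGk, Finset.sum_const, Finset.card_range, nsmul_eq_mul]
  ring

lemma misreport {n : ℕ} (hn : 8 ≤ n) (hne : Even n)
    {rk' : Fin n → Fin n → ℕ} (i1 : Fin n) (hi1 : (i1 : ℕ) = 0)
    (h1 : ∀ j : Fin n, rk' i1 j =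
        if (j : ℕ) = 0 then n / 2 - 2
        else if (j : ℕ) ≤ n / 2 - 2 then (j : ℕ) - 1 else (j : ℕ))
    (h2 : ∀ i : Fin n, (i : ℕ) = 1 → ∀ j : Fin n, rk' i j = (j : ℕ))
    (h3 : ∀ i : Fin n, 2 ≤ (i : ℕ) → ∀ j : Fin n, rk' i j = if (j : ℕ) = 0 then n else (j : ℕ))
    (E' : PSExec n n rk' (fun _ _ => True)) :
    (∀ j : Fin n, 1 ≤ (j : ℕ) → (j : ℕ) ≤ n / 2 - 2 → E'.alloc i1 j = 1 / ((n : ℝ) - 1)) ∧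
    (∀ j : Fin n, (j : ℕ) = 0 → E'.alloc i1 j = ((n : ℝ) + 2) / (4 * ((n : ℝ) - 1))) := by
  classical
  have hn0 : 0 < n := by omega
  set H : ℕ := n / 2 with hHdef
  have hH : n = 2 * H := by obtain ⟨r, hr⟩ := hne; omega
  have hH4 : 4 ≤ H := by omega
  have hnR : (8 : ℝ) ≤ (n : ℝ) := by exact_mod_cast hn
  have hHR : (n : ℝ) = 2 * (H : ℝ) := by exact_mod_cast congrArg (Nat.cast (R := ℝ)) hH
  set it : ℕ → Fin n := fun k => ⟨k % n, Nat.mod_lt _ hn0⟩ with hitdef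
  have hit : ∀ k, k < n → ((it k : Fin n) : ℕ) = k := fun k hk => Nat.mod_eq_of_lt hk
  have hit0 : ((it 0 : Fin n) : ℕ) = 0 := hit 0 hn0
  set Δ : ℝ := 1 / ((n : ℝ) - 1) with hΔdef
  have hΔpos : 0 < Δ := div_pos one_pos (by linarith)
  set τ : ℕ → ℝ := fun k => (k : ℝ) * Δ with hτdef
  have hτ0 : τ 0 = 0 := by simp [hτdef]
  have hτnonneg : ∀ k, 0 ≤ τ k := fun k => mul_nonneg (Nat.cast_nonneg k) (le_of_lt hΔpos)
  have hτmono : ∀ k k' : ℕ, k < k' → τ k < τ k' := by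
    intro k k' hkk'
    exact mul_lt_mul_of_pos_right (by exact_mod_cast hkk') hΔpos
  have hτlt1 : ∀ k : ℕ, k ≤ n - 2 → τ k < 1 := by
    intro k hk
    have hkR : (k : ℝ) ≤ (n : ℝ) - 2 := by
      have h' : ((k : ℕ) : ℝ) ≤ ((n - 2 : ℕ) : ℝ) := Nat.cast_le.mpr hk
      push_cast [Nat.cast_sub (show 2 ≤ n by omega)] at h'
      linarith
    rw [hτdef]
    simp only
    rw [hΔdef, mul_one_div, div_lt_one (by linarith)]
    linarith
  have hτle1 : ∀ k : ℕ, k ≤ n - 1 → τ k ≤ 1 := by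
    intro k hk
    have hkR : (k : ℝ) ≤ (n : ℝ) - 1 := by
      have h' : ((k : ℕ) : ℝ) ≤ ((n - 1 : ℕ) : ℝ) := Nat.cast_le.mpr hk
      push_cast [Nat.cast_sub (show 1 ≤ n by omega)] at h'
      linarith
    rw [hτdef]
    simp only
    rw [hΔdef, mul_one_div, div_le_one (by linarith)]
    linarith
  -- the invariant through the first H-2 phases
  have inv : ∀ k, k ≤ H - 2 →
      (E'.rem (it 0) (τ k) = 1 - τ k) ∧
      (∀ j : Fin n, 1 ≤ (j : ℕ) → (j : ℕ) ≤ k → E'.rem j (τ k) ≤ 0) ∧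
      (∀ j : Fin n, k < (j : ℕ) → E'.rem j (τ k) = 1) ∧
      (∀ k', 1 ≤ k' → k' ≤ k → ∀ s, τ (k' - 1) < s → s < τ k' → ∀ i : Fin n,
        E'.eats i s = some (if (i : ℕ) = 1 then it 0 else it k')) := by
    intro k
    induction k with
    | zero =>
      intro _
      refine ⟨by rw [hτ0, rem_zero]; ring, fun j hj1 hj2 => by omega, fun j _ => by
        rw [hτ0, rem_zero], fun k' hk1 hk2 => by omega⟩
    | succ k ih =>
      intro hk1
      obtain ⟨ih1, ih2, ih3, ih4⟩ := ih (by omega)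
      have hkn : k + 1 < n := by omega
      set e : Fin n → Option (Fin n) :=
        fun i => if (i : ℕ) = 1 then some (it 0) else some (it (k + 1)) with hedef
      have hitk_ne : it (k + 1) ≠ it 0 := by
        intro hcon
        have hv := congrArg Fin.val hcon
        rw [hit (k + 1) hkn, hit0] at hv
        omega
      have hcard0 : (Finset.univ.filter (fun i : Fin n => e i = some (it 0))).card = 1 := by
        rw [show (Finset.univ.filter (fun i : Fin n => e i = some (it 0)))
            = (Finset.univ.filter (fun i : Fin n => (i : ℕ) = 1)) from ?_]
        · exact card_val_eq (by omega)
        · apply Finset.filter_congr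
          intro i _
          simp only [hedef]
          by_cases h : (i : ℕ) = 1
          · simp [h]
          · simp [h, hitk_ne]
      have hcardk : (Finset.univ.filter (fun i : Fin n => e i = some (it (k + 1)))).card
          = n - 1 := by
        rw [show (Finset.univ.filter (fun i : Fin n => e i = some (it (k + 1))))
            = (Finset.univ.filter (fun i : Fin n => ¬ (i : ℕ) = 1)) from ?_]
        · exact card_val_ne (by omega) (show 1 < n by omega)
        · apply Finset.filter_congr
          intro i _
          simp only [hedef]
          by_cases h : (i : ℕ) = 1
          · simp [h, Ne.symm hitk_ne]
          · simp [h]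
      have hcard_other : ∀ j : Fin n, (j : ℕ) ≠ 0 → (j : ℕ) ≠ k + 1 →
          (Finset.univ.filter (fun i : Fin n => e i = some j)).card = 0 := by
        intro j hj0 hjk
        rw [Finset.card_eq_zero, Finset.filter_eq_empty_iff]
        intro i _
        simp only [hedef]
        by_cases h : (i : ℕ) = 1
        · simp only [h, if_pos]
          intro hcon
          have hv := congrArg Fin.val (Option.some_injective _ hcon)
          rw [hit0] at hv
          exact hj0 hv.symm
        · simp only [h, if_neg, if_false]
          intro hcon
          have hv := congrArg Fin.val (Option.some_injective _ hcon)
          rw [hit (k + 1) hkn] at hv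
          exact hjk hv.symm
      have hj0eq : ∀ j : Fin n, (j : ℕ) = 0 → j = it 0 := by
        intro j hj; apply Fin.ext; rw [hj, hit0]
      have hjkeq : ∀ j : Fin n, (j : ℕ) = k + 1 → j = it (k + 1) := by
        intro j hj; apply Fin.ext; rw [hj, hit (k + 1) hkn]
      have hΔτ : τ (k + 1) - τ k = Δ := by
        rw [hτdef]; push_cast; ring
      have hph := phase E' (τ k) (τ (k + 1)) (hτnonneg k) (hτmono k (k + 1) (by omega)) e
        (fun j => (j : ℕ) = 0 ∨ k + 1 ≤ (j : ℕ)) (fun j => 1 ≤ (j : ℕ) ∧ (j : ℕ) ≤ k)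
        (fun j hj => ih2 j hj.1 hj.2)
        (by
          -- hD
          intro j hDj
          rcases hDj with hj0 | hjk
          · rw [hj0eq j hj0, hcard0, ih1]
            constructor
            · have := hτlt1 k (by omega); linarith
            · rw [hΔτ]
              have := hτle1 (k + 1) (by omega)
              simp only [Nat.cast_one, one_mul]
              rw [hτdef] at this ⊢
              push_cast at this ⊢
              linarith
          · rcases Nat.eq_or_lt_of_le hjk with hjk' | hjk'
            · rw [hjkeq j hjk'.symm, hcardk, ih3 (it (k + 1)) (by rw [hit (k + 1) hkn]; omega)]
              refine ⟨one_pos, ?_⟩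
              rw [hΔτ, hΔdef]
              rw [Nat.cast_sub (by omega)]
              rw [mul_one_div]
              rw [div_le_one (by linarith)]
              push_cast
              linarith
            · rw [hcard_other j (by omega) (by omega), ih3 j (by omega)]
              norm_num)
        (by
          -- hDe
          intro i j0 hei
          by_cases hiv1 : (i : ℕ) = 1
          · simp only [hedef, hiv1, if_pos] at hei
            have hj0 : j0 = it 0 := (Option.some_injective _ hei).symm
            subst hj0
            refine ⟨Or.inl hit0, fun j' _ => ?_⟩
            rw [h2 i hiv1 (it 0), h2 i hiv1 j', hit0]
            exact Nat.zero_le _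
          · simp only [hedef, hiv1, if_neg, if_false] at hei
            have hj0 : j0 = it (k + 1) := (Option.some_injective _ hei).symm
            subst hj0
            refine ⟨Or.inr (by rw [hit (k + 1) hkn]), fun j' hZj' => ?_⟩
            by_cases hiv0 : (i : ℕ) = 0
            · have hii1 : i = i1 := Fin.ext (by rw [hiv0, hi1])
              subst hii1
              rw [h1 (it (k + 1)), h1 j', hit (k + 1) hkn]
              rw [if_neg (by omega), if_pos (by omega)]
              by_cases hj'0 : (j' : ℕ) = 0
              · rw [if_pos hj'0]; omega
              · rw [if_neg hj'0]
                by_cases hj'le : (j' : ℕ) ≤ n / 2 - 2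
                · rw [if_pos hj'le]
                  have : ¬ (1 ≤ (j' : ℕ) ∧ (j' : ℕ) ≤ k) := hZj'
                  omega
                · rw [if_neg hj'le]; omega
            · have hiv2 : 2 ≤ (i : ℕ) := by omega
              rw [h3 i hiv2 (it (k + 1)), h3 i hiv2 j', hit (k + 1) hkn]
              rw [if_neg (by omega)]
              by_cases hj'0 : (j' : ℕ) = 0
              · rw [if_pos hj'0]
                omega
              · rw [if_neg hj'0]
                have : ¬ (1 ≤ (j' : ℕ) ∧ (j' : ℕ) ≤ k) := hZj'
                omega)
        (by
          -- hu : vacuous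
          intro i hei
          exfalso
          by_cases h : (i : ℕ) = 1 <;> simp [hedef, h] at hei)
      obtain ⟨Peat, Prem⟩ := hph
      have hle01 : τ k ≤ τ (k + 1) := le_of_lt (hτmono k (k + 1) (by omega))
      refine ⟨?_, ?_, ?_, ?_⟩
      · -- rem of item 0
        have := Prem (it 0) (Or.inl hit0) (τ (k + 1)) hle01 le_rfl
        rw [hcard0, ih1, hΔτ] at this
        rw [this]
        simp only [Nat.cast_one, one_mul]
        rw [hτdef]
        push_cast
        rw [hΔdef]
        ring
      · -- exhausted items
        intro j hjge1 hjle
        rcases Nat.lt_or_ge (j : ℕ) (k + 1) with hlt | hge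
        · calc E'.rem j (τ (k + 1)) ≤ E'.rem j (τ k) :=
              rem_antitone E' j (hτnonneg k) hle01
            _ ≤ 0 := ih2 j hjge1 (by omega)
        · have hjk' : (j : ℕ) = k + 1 := by omega
          have := Prem j (Or.inr hge) (τ (k + 1)) hle01 le_rfl
          rw [hjkeq j hjk'] at this ⊢
          rw [hcardk, ih3 (it (k + 1)) (by rw [hit (k + 1) hkn]; omega), hΔτ] at this
          rw [this, Nat.cast_sub (by omega), hΔdef]
          push_cast
          have hne1 : (n : ℝ) - 1 ≠ 0 := by linarith
          have hx : ((n : ℝ) - 1) * ((1 : ℝ) / ((n : ℝ) - 1)) = 1 := by field_simp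
          nlinarith [hx]
      · -- untouched items
        intro j hjgt
        have := Prem j (Or.inr (by omega)) (τ (k + 1)) hle01 le_rfl
        rw [hcard_other j (by omega) (by omega), ih3 j (by omega)] at this
        rw [this]
        norm_num
      · -- eats description
        intro k' hk'1 hk'2 s hs1 hs2 i
        rcases Nat.lt_or_ge k' (k + 1) with hlt | hge
        · exact ih4 k' hk'1 (by omega) s hs1 hs2 i
        · have hk'eq : k' = k + 1 := by omega
          subst hk'eq
          have : k + 1 - 1 = k := by omega
          rw [this] at hs1
          refine Peat s hs1 hs2 i _ ?_
          by_cases h : (i : ℕ) = 1 <;> simp [hedef, h]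
  obtain ⟨inv1, inv2, inv3, inv4⟩ := inv (H - 2) le_rfl
  have hτeq : ∀ k : ℕ, τ k = (k : ℝ) * Δ := fun k => by rw [hτdef]
  set T0 : ℝ := τ (H - 2) + (1 - τ (H - 2)) / 2 with hT0def
  have hτH2lt1 : τ (H - 2) < 1 := hτlt1 (H - 2) (by omega)
  have hτH2nonneg : 0 ≤ τ (H - 2) := hτnonneg _
  have hT0gt : τ (H - 2) < T0 := by rw [hT0def]; linarith
  have hτH2 : τ (H - 2) = ((H : ℝ) - 2) / ((n : ℝ) - 1) := by
    rw [hτeq, Nat.cast_sub (by omega), hΔdef]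
    push_cast
    ring
  have hn1pos : (0 : ℝ) < (n : ℝ) - 1 := by linarith
  have hH4R : (4 : ℝ) ≤ (H : ℝ) := by exact_mod_cast hH4
  have hT0le : (n : ℝ) * T0 ≤ (n : ℝ) - 1 := by
    rw [hT0def, hτH2, hHR]
    have h2x : (0 : ℝ) < 2 * (H : ℝ) - 1 := by linarith
    nlinarith [div_mul_cancel₀ ((H : ℝ) - 2) (ne_of_gt h2x), sq_nonneg ((H : ℝ) - 1),
      div_nonneg (by linarith : (0:ℝ) ≤ (H : ℝ) - 2) (le_of_lt h2x)]
  set e2 : Fin n → Option (Fin n) := fun i => if (i : ℕ) ≤ 1 then some (it 0) else none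
    with he2def
  have hcard2 : (Finset.univ.filter (fun i : Fin n => e2 i = some (it 0))).card = 2 := by
    rw [show (Finset.univ.filter (fun i : Fin n => e2 i = some (it 0)))
        = (Finset.univ.filter (fun i : Fin n => (i : ℕ) ≤ 1)) from ?_]
    · exact card_val_le_one (by omega)
    · apply Finset.filter_congr
      intro i _
      by_cases h : (i : ℕ) ≤ 1 <;> simp [he2def, h]
  have hT0half : T0 - τ (H - 2) = (1 - τ (H - 2)) / 2 := by rw [hT0def]; ring
  have hph2 := phase E' (τ (H - 2)) T0 hτH2nonneg hT0gt e2 (fun j => (j : ℕ) = 0)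
    (fun j => 1 ≤ (j : ℕ) ∧ (j : ℕ) ≤ H - 2)
    (fun j hj => inv2 j hj.1 hj.2)
    (by
      intro j hj
      have hj' : j = it 0 := Fin.ext (by rw [hj, hit0])
      subst hj'
      rw [hcard2, inv1]
      refine ⟨by linarith, ?_⟩
      rw [hT0half]
      push_cast
      linarith)
    (by
      intro i j0 hei
      by_cases hle : (i : ℕ) ≤ 1
      · simp only [he2def, hle, if_pos] at hei
        have hj0 : j0 = it 0 := (Option.some_injective _ hei).symm
        subst hj0
        refine ⟨hit0, fun j' hZj' => ?_⟩
        by_cases hiv0 : (i : ℕ) = 0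
        · have hii1 : i = i1 := Fin.ext (by rw [hiv0, hi1])
          subst hii1
          rw [h1 (it 0), h1 j', hit0, if_pos rfl]
          by_cases hj'0 : (j' : ℕ) = 0
          · rw [if_pos hj'0]
          · rw [if_neg hj'0]
            have hnz : ¬ (1 ≤ (j' : ℕ) ∧ (j' : ℕ) ≤ H - 2) := hZj'
            rw [if_neg (by omega)]
            omega
        · have hiv1 : (i : ℕ) = 1 := by omega
          rw [h2 i hiv1 (it 0), h2 i hiv1 j', hit0]
          exact Nat.zero_le _
      · simp [he2def, hle] at hei)
    (by
      intro i hei s hs0 hs1 j hj heats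
      have hiv2 : 2 ≤ (i : ℕ) := by
        by_contra hcon
        simp [he2def, show (i : ℕ) ≤ 1 by omega] at hei
      have hs0' : (0 : ℝ) ≤ s := le_trans hτH2nonneg hs0
      have hj' : j = it 0 := Fin.ext (by rw [hj, hit0])
      subst hj'
      obtain ⟨hpos, hmin⟩ := (eats_iff' E' i s hs0' (it 0)).mp heats
      obtain ⟨j', hj'ne, hj'pos⟩ := exists_pos E' (it 0) s hs0' hn0 (by
        have hns : (n : ℝ) * s < (n : ℝ) * T0 :=
          mul_lt_mul_of_pos_left hs1 (by exact_mod_cast hn0)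
        linarith)
      have hmin' := hmin j' hj'pos
      rw [h3 i hiv2 (it 0), h3 i hiv2 j', hit0, if_pos rfl] at hmin'
      have hj'v : (j' : ℕ) ≠ 0 := fun hc => hj'ne (Fin.ext (by rw [hc, hit0]))
      rw [if_neg hj'v] at hmin'
      have := j'.isLt
      omega)
  obtain ⟨Peat2, Prem2⟩ := hph2
  have hrem0T0 : E'.rem (it 0) T0 = 0 := by
    have hP := Prem2 (it 0) hit0 T0 (le_of_lt hT0gt) le_rfl
    rw [hcard2, inv1, hT0half] at hP
    rw [hP]
    push_cast
    ring
  set F : Set ℝ := Set.range τ ∪ {T0} with hFdef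
  have hFc : F.Countable := (Set.countable_range τ).union (Set.countable_singleton T0)
  have hτmem : ∀ k, τ k ∈ F := fun k => Or.inl ⟨k, rfl⟩
  have hi1ne1 : (i1 : ℕ) ≠ 1 := by omega
  have heatsA : ∀ k', 1 ≤ k' → k' ≤ H - 2 → ∀ s, τ (k' - 1) < s → s < τ k' →
      E'.eats i1 s = some (it k') := by
    intro k' ha hb s hs1 hs2
    have := inv4 k' ha hb s hs1 hs2 i1
    rwa [if_neg hi1ne1] at this
  constructor
  · -- items 1 .. H-2
    intro j hj1 hj2
    have hjn : (j : ℕ) < n := j.isLt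
    have hjit : it (j : ℕ) = j := Fin.ext (hit _ hjn)
    have hremj : E'.rem j (τ (j : ℕ)) ≤ 0 := (inv ((j : ℕ)) (by omega)).2.1 j hj1 le_rfl
    have hΔval : τ ((j : ℕ)) - τ ((j : ℕ) - 1) = 1 / ((n : ℝ) - 1) := by
      rw [hτeq, hτeq, Nat.cast_sub (by omega : 1 ≤ (j : ℕ)), hΔdef]
      push_cast
      ring
    have halloc := alloc_eq E' i1 j
      (a := τ ((j : ℕ) - 1)) (b := τ ((j : ℕ)))
      (le_of_lt (hτmono _ _ (by omega))) F hFc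
      (by
        rintro s ⟨hsIoo, -⟩
        refine ⟨lt_of_le_of_lt (hτnonneg _) hsIoo.1, ?_⟩
        rw [heatsA (j : ℕ) hj1 hj2 s hsIoo.1 hsIoo.2, hjit])
      (by
        rintro s ⟨hs0, hseats⟩
        rcases le_or_gt s (τ ((j : ℕ))) with hle | hgt
        · obtain ⟨k', hk'1, hk'2, hk'3, hk'4⟩ := covering hΔpos (j : ℕ) s hs0
            (by rw [← hτeq]; exact hle)
          rcases eq_or_lt_of_le hk'4 with heq | hlt
          · exact Or.inr (heq ▸ hτmem k')
          · have heats' := heatsA k' hk'1 (by omega) s (by rw [hτeq]; exact hk'3)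
              (by rw [hτeq]; exact hlt)
            rw [hseats] at heats'
            have hkj : k' = (j : ℕ) := by
              have hv := congrArg Fin.val (Option.some_injective _ heats')
              rw [hit k' (by omega)] at hv
              exact hv.symm ▸ rfl
            subst hkj
            exact Or.inl ⟨by rw [hτeq]; exact hk'3, by rw [hτeq]; exact hlt⟩
        · exfalso
          have hr1 : E'.rem j s ≤ E'.rem j (τ ((j : ℕ))) :=
            rem_antitone E' j (hτnonneg _) (le_of_lt hgt)
          have hr2 : 0 < E'.rem j s :=
            ((eats_iff' E' i1 s (le_of_lt hs0) j).mp hseats).1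
          linarith)
    rw [halloc, hΔval]
  · -- item 0
    intro j hj0
    have hjit : j = it 0 := Fin.ext (by rw [hj0, hit0])
    subst hjit
    have hval : T0 - τ (H - 2) = ((n : ℝ) + 2) / (4 * ((n : ℝ) - 1)) := by
      rw [hT0half, hτH2, hHR]
      have h2x : (0 : ℝ) < 2 * (H : ℝ) - 1 := by linarith
      have h2x' : 2 * (H : ℝ) - 1 ≠ 0 := by linarith
      rw [one_sub_div h2x', div_div, div_eq_div_iff (mul_ne_zero h2x' two_ne_zero) (mul_ne_zero four_ne_zero h2x')]
      ring
    have halloc := alloc_eq E' i1 (it 0)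
      (a := τ (H - 2)) (b := T0) (le_of_lt hT0gt) F hFc
      (by
        rintro s ⟨hsIoo, -⟩
        refine ⟨lt_of_le_of_lt hτH2nonneg hsIoo.1, ?_⟩
        refine Peat2 s hsIoo.1 hsIoo.2 i1 (it 0) ?_
        simp [he2def, show (i1 : ℕ) ≤ 1 by omega])
      (by
        rintro s ⟨hs0, hseats⟩
        rcases le_or_gt s (τ (H - 2)) with hle | hgt
        · obtain ⟨k', hk'1, hk'2, hk'3, hk'4⟩ := covering hΔpos (H - 2) s hs0
            (by rw [← hτeq]; exact hle)
          rcases eq_or_lt_of_le hk'4 with heq | hlt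
          · exact Or.inr (heq ▸ hτmem k')
          · exfalso
            have heats' := heatsA k' hk'1 hk'2 s (by rw [hτeq]; exact hk'3)
              (by rw [hτeq]; exact hlt)
            rw [hseats] at heats'
            have hv := congrArg Fin.val (Option.some_injective _ heats')
            rw [hit0, hit k' (by omega)] at hv
            omega
        · rcases lt_trichotomy s T0 with hsT | hsT | hsT
          · exact Or.inl ⟨hgt, hsT⟩
          · exact Or.inr (Or.inr hsT)
          · exfalso
            have hr1 : E'.rem (it 0) s ≤ E'.rem (it 0) T0 :=
              rem_antitone E' (it 0) (le_trans hτH2nonneg (le_of_lt hT0gt)) (le_of_lt hsT)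
            have hr2 : 0 < E'.rem (it 0) s :=
              ((eats_iff' E' i1 s (le_of_lt hs0) (it 0)).mp hseats).1
            rw [hrem0T0] at hr1
            linarith)
    rw [halloc, hval]

lemma truth {n : ℕ} (hn : 8 ≤ n) (hne : Even n)
    {rk : Fin n → Fin n → ℕ} (i1 : Fin n) (hi1 : (i1 : ℕ) = 0)
    (h12 : ∀ i : Fin n, (i : ℕ) ≤ 1 → ∀ j : Fin n, rk i j = (j : ℕ))
    (h3 : ∀ i : Fin n, 2 ≤ (i : ℕ) → ∀ j : Fin n, rk i j = if (j : ℕ) = 0 then n else (j : ℕ))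
    (E : PSExec n n rk (fun _ _ => True)) :
    (∀ j : Fin n, 1 ≤ (j : ℕ) → (j : ℕ) ≤ n / 2 - 2 → E.alloc i1 j = 0) ∧
    (∀ j : Fin n, (j : ℕ) = 0 → E.alloc i1 j = 1 / 2) := by
  classical
  have hn0 : 0 < n := by omega
  set H : ℕ := n / 2 with hHdef
  have hH : n = 2 * H := by obtain ⟨r, hr⟩ := hne; omega
  have hH4 : 4 ≤ H := by omega
  have hnR : (8 : ℝ) ≤ (n : ℝ) := by exact_mod_cast hn
  have hHR : (n : ℝ) = 2 * (H : ℝ) := by exact_mod_cast congrArg (Nat.cast (R := ℝ)) hH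
  have hH4R : (4 : ℝ) ≤ (H : ℝ) := by exact_mod_cast hH4
  set it : ℕ → Fin n := fun k => ⟨k % n, Nat.mod_lt _ hn0⟩ with hitdef
  have hit : ∀ k, k < n → ((it k : Fin n) : ℕ) = k := fun k hk => Nat.mod_eq_of_lt hk
  have hit0 : ((it 0 : Fin n) : ℕ) = 0 := hit 0 hn0
  set Δ : ℝ := 1 / ((n : ℝ) - 2) with hΔdef
  have hΔpos : 0 < Δ := div_pos one_pos (by linarith)
  set σ : ℕ → ℝ := fun k => (k : ℝ) * Δ with hσdef
  have hσeq : ∀ k : ℕ, σ k = (k : ℝ) * Δ := fun k => by rw [hσdef]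
  have hσ0 : σ 0 = 0 := by simp [hσdef]
  have hσnonneg : ∀ k, 0 ≤ σ k := fun k => mul_nonneg (Nat.cast_nonneg k) (le_of_lt hΔpos)
  have hσmono : ∀ k k' : ℕ, k < k' → σ k < σ k' := by
    intro k k' hkk'
    exact mul_lt_mul_of_pos_right (by exact_mod_cast hkk') hΔpos
  have hσmono' : ∀ k k' : ℕ, k ≤ k' → σ k ≤ σ k' := by
    intro k k' hkk'
    exact mul_le_mul_of_nonneg_right (by exact_mod_cast hkk') (le_of_lt hΔpos)
  have hσlt : ∀ k : ℕ, k ≤ H - 2 → σ k < 1 / 2 := by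
    intro k hk
    have hkR : (k : ℝ) ≤ (H : ℝ) - 2 := by
      have h' : ((k : ℕ) : ℝ) ≤ ((H - 2 : ℕ) : ℝ) := Nat.cast_le.mpr hk
      push_cast [Nat.cast_sub (show 2 ≤ H by omega)] at h'
      linarith
    rw [hσeq, hΔdef, mul_one_div, div_lt_iff₀ (by linarith)]
    linarith
  have hσle : ∀ k : ℕ, k ≤ H - 1 → σ k ≤ 1 / 2 := by
    intro k hk
    have hkR : (k : ℝ) ≤ (H : ℝ) - 1 := by
      have h' : ((k : ℕ) : ℝ) ≤ ((H - 1 : ℕ) : ℝ) := Nat.cast_le.mpr hk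
      push_cast [Nat.cast_sub (show 1 ≤ H by omega)] at h'
      linarith
    rw [hσeq, hΔdef, mul_one_div, div_le_iff₀ (by linarith)]
    linarith
  have hσH1 : σ (H - 1) = 1 / 2 := by
    rw [hσeq, Nat.cast_sub (by omega : 1 ≤ H), hΔdef, hHR]
    push_cast
    have : 2 * (H : ℝ) - 2 ≠ 0 := by linarith
    have : (H : ℝ) - 1 ≠ 0 := by linarith
    field_simp
  have inv : ∀ k, k ≤ H - 1 →
      (E.rem (it 0) (σ k) = 1 - 2 * σ k) ∧
      (∀ j : Fin n, 1 ≤ (j : ℕ) → (j : ℕ) ≤ k → E.rem j (σ k) ≤ 0) ∧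
      (∀ j : Fin n, k < (j : ℕ) → E.rem j (σ k) = 1) ∧
      (∀ k', 1 ≤ k' → k' ≤ k → ∀ s, σ (k' - 1) < s → s < σ k' → ∀ i : Fin n,
        E.eats i s = some (if (i : ℕ) ≤ 1 then it 0 else it k')) := by
    intro k
    induction k with
    | zero =>
      intro _
      refine ⟨by rw [hσ0, rem_zero]; ring, fun j hj1 hj2 => by omega, fun j _ => by
        rw [hσ0, rem_zero], fun k' hk1 hk2 => by omega⟩
    | succ k ih =>
      intro hk1
      obtain ⟨ih1, ih2, ih3, ih4⟩ := ih (by omega)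
      have hkn : k + 1 < n := by omega
      set e : Fin n → Option (Fin n) :=
        fun i => if (i : ℕ) ≤ 1 then some (it 0) else some (it (k + 1)) with hedef
      have hitk_ne : it (k + 1) ≠ it 0 := by
        intro hcon
        have hv := congrArg Fin.val hcon
        rw [hit (k + 1) hkn, hit0] at hv
        omega
      have hcard0 : (Finset.univ.filter (fun i : Fin n => e i = some (it 0))).card = 2 := by
        rw [show (Finset.univ.filter (fun i : Fin n => e i = some (it 0)))
            = (Finset.univ.filter (fun i : Fin n => (i : ℕ) ≤ 1)) from ?_]
        · exact card_val_le_one (by omega)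
        · apply Finset.filter_congr
          intro i _
          simp only [hedef]
          by_cases h : (i : ℕ) ≤ 1
          · simp [h]
          · simp [h, hitk_ne]
      have hcardk : (Finset.univ.filter (fun i : Fin n => e i = some (it (k + 1)))).card
          = n - 2 := by
        rw [show (Finset.univ.filter (fun i : Fin n => e i = some (it (k + 1))))
            = (Finset.univ.filter (fun i : Fin n => ¬ (i : ℕ) ≤ 1)) from ?_]
        · exact card_val_not_le_one (by omega)
        · apply Finset.filter_congr
          intro i _
          simp only [hedef]
          by_cases h : (i : ℕ) ≤ 1
          · simp [h, Ne.symm hitk_ne]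
          · simp [h]
      have hcard_other : ∀ j : Fin n, (j : ℕ) ≠ 0 → (j : ℕ) ≠ k + 1 →
          (Finset.univ.filter (fun i : Fin n => e i = some j)).card = 0 := by
        intro j hj0 hjk
        rw [Finset.card_eq_zero, Finset.filter_eq_empty_iff]
        intro i _
        simp only [hedef]
        by_cases h : (i : ℕ) ≤ 1
        · simp only [h, if_pos]
          intro hcon
          have hv := congrArg Fin.val (Option.some_injective _ hcon)
          rw [hit0] at hv
          exact hj0 hv.symm
        · simp only [h, if_neg, if_false]
          intro hcon
          have hv := congrArg Fin.val (Option.some_injective _ hcon)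
          rw [hit (k + 1) hkn] at hv
          exact hjk hv.symm
      have hj0eq : ∀ j : Fin n, (j : ℕ) = 0 → j = it 0 := by
        intro j hj; apply Fin.ext; rw [hj, hit0]
      have hjkeq : ∀ j : Fin n, (j : ℕ) = k + 1 → j = it (k + 1) := by
        intro j hj; apply Fin.ext; rw [hj, hit (k + 1) hkn]
      have hΔσ : σ (k + 1) - σ k = Δ := by
        rw [hσeq, hσeq]; push_cast; ring
      have hph := phase E (σ k) (σ (k + 1)) (hσnonneg k) (hσmono k (k + 1) (by omega)) e
        (fun j => (j : ℕ) = 0 ∨ k + 1 ≤ (j : ℕ)) (fun j => 1 ≤ (j : ℕ) ∧ (j : ℕ) ≤ k)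
        (fun j hj => ih2 j hj.1 hj.2)
        (by
          intro j hDj
          rcases hDj with hj0 | hjk
          · rw [hj0eq j hj0, hcard0, ih1]
            have hklt : σ k < 1 / 2 := hσlt k (by omega)
            have hkle : σ (k + 1) ≤ 1 / 2 := hσle (k + 1) (by omega)
            refine ⟨by linarith, ?_⟩
            push_cast
            linarith
          · rcases Nat.eq_or_lt_of_le hjk with hjk' | hjk'
            · rw [hjkeq j hjk'.symm, hcardk, ih3 (it (k + 1)) (by rw [hit (k + 1) hkn]; omega)]
              refine ⟨one_pos, ?_⟩
              rw [hΔσ, Nat.cast_sub (by omega), hΔdef]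
              push_cast
              have hne2 : (n : ℝ) - 2 ≠ 0 := by linarith
              have hx : ((n : ℝ) - 2) * ((1 : ℝ) / ((n : ℝ) - 2)) = 1 := by field_simp
              nlinarith [hx]
            · rw [hcard_other j (by omega) (by omega), ih3 j (by omega)]
              norm_num)
        (by
          intro i j0 hei
          by_cases hle : (i : ℕ) ≤ 1
          · simp only [hedef, hle, if_pos] at hei
            have hj0 : j0 = it 0 := (Option.some_injective _ hei).symm
            subst hj0
            refine ⟨Or.inl hit0, fun j' _ => ?_⟩
            rw [h12 i hle (it 0), h12 i hle j', hit0]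
            exact Nat.zero_le _
          · simp only [hedef, hle, if_neg, if_false] at hei
            have hj0 : j0 = it (k + 1) := (Option.some_injective _ hei).symm
            subst hj0
            have hiv2 : 2 ≤ (i : ℕ) := by omega
            refine ⟨Or.inr (by rw [hit (k + 1) hkn]), fun j' hZj' => ?_⟩
            rw [h3 i hiv2 (it (k + 1)), h3 i hiv2 j', hit (k + 1) hkn]
            rw [if_neg (by omega)]
            by_cases hj'0 : (j' : ℕ) = 0
            · rw [if_pos hj'0]
              omega
            · rw [if_neg hj'0]
              have hnz : ¬ (1 ≤ (j' : ℕ) ∧ (j' : ℕ) ≤ k) := hZj'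
              omega)
        (by
          intro i hei
          exfalso
          by_cases h : (i : ℕ) ≤ 1 <;> simp [hedef, h] at hei)
      obtain ⟨Peat, Prem⟩ := hph
      have hle01 : σ k ≤ σ (k + 1) := le_of_lt (hσmono k (k + 1) (by omega))
      refine ⟨?_, ?_, ?_, ?_⟩
      · have hP := Prem (it 0) (Or.inl hit0) (σ (k + 1)) hle01 le_rfl
        rw [hcard0, ih1, hΔσ] at hP
        rw [hP, hσeq, hσeq]
        push_cast
        ring
      · intro j hjge1 hjle
        rcases Nat.lt_or_ge (j : ℕ) (k + 1) with hlt | hge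
        · calc E.rem j (σ (k + 1)) ≤ E.rem j (σ k) :=
              rem_antitone E j (hσnonneg k) hle01
            _ ≤ 0 := ih2 j hjge1 (by omega)
        · have hjk' : (j : ℕ) = k + 1 := by omega
          have hP := Prem j (Or.inr hge) (σ (k + 1)) hle01 le_rfl
          rw [hjkeq j hjk'] at hP ⊢
          rw [hcardk, ih3 (it (k + 1)) (by rw [hit (k + 1) hkn]; omega), hΔσ] at hP
          rw [hP, Nat.cast_sub (by omega), hΔdef]
          push_cast
          have hne2 : (n : ℝ) - 2 ≠ 0 := by linarith
          have hx : ((n : ℝ) - 2) * ((1 : ℝ) / ((n : ℝ) - 2)) = 1 := by field_simp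
          nlinarith [hx]
      · intro j hjgt
        have hP := Prem j (Or.inr (by omega)) (σ (k + 1)) hle01 le_rfl
        rw [hcard_other j (by omega) (by omega), ih3 j (by omega)] at hP
        rw [hP]
        norm_num
      · intro k' hk'1 hk'2 s hs1 hs2 i
        rcases Nat.lt_or_ge k' (k + 1) with hlt | hge
        · exact ih4 k' hk'1 (by omega) s hs1 hs2 i
        · have hk'eq : k' = k + 1 := by omega
          subst hk'eq
          have hkk : k + 1 - 1 = k := by omega
          rw [hkk] at hs1
          refine Peat s hs1 hs2 i _ ?_
          by_cases h : (i : ℕ) ≤ 1 <;> simp [hedef, h]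
  obtain ⟨inv1, inv2, inv3, inv4⟩ := inv (H - 1) le_rfl
  have hrem0 : E.rem (it 0) (σ (H - 1)) = 0 := by
    rw [inv1, hσH1]
    ring
  set F : Set ℝ := Set.range σ with hFdef
  have hFc : F.Countable := Set.countable_range σ
  have hσmem : ∀ k, σ k ∈ F := fun k => ⟨k, rfl⟩
  have hi1le1 : (i1 : ℕ) ≤ 1 := by omega
  have heatsA : ∀ k', 1 ≤ k' → k' ≤ H - 1 → ∀ s, σ (k' - 1) < s → s < σ k' →
      E.eats i1 s = some (it 0) := by
    intro k' ha hb s hs1 hs2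
    have := inv4 k' ha hb s hs1 hs2 i1
    rwa [if_pos hi1le1] at this
  constructor
  · -- items 1 .. H-2 get nothing
    intro j hj1 hj2
    have hjn : (j : ℕ) < n := j.isLt
    have hremj : E.rem j (σ (j : ℕ)) ≤ 0 := (inv ((j : ℕ)) (by omega)).2.1 j hj1 le_rfl
    have hitne : it 0 ≠ j := by
      intro hcon
      have hv := congrArg Fin.val hcon
      rw [hit0] at hv
      omega
    refine alloc_zero E i1 j F hFc ?_
    rintro s ⟨hs0, hseats⟩
    rcases le_or_gt s (σ ((j : ℕ))) with hle | hgt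
    · obtain ⟨k', hk'1, hk'2, hk'3, hk'4⟩ := covering hΔpos (j : ℕ) s hs0
        (by rw [← hσeq]; exact hle)
      rcases eq_or_lt_of_le hk'4 with heq | hlt
      · exact heq ▸ hσmem k'
      · exfalso
        have heats' := heatsA k' hk'1 (by omega) s (by rw [hσeq]; exact hk'3)
          (by rw [hσeq]; exact hlt)
        rw [hseats] at heats'
        exact hitne (Option.some_injective _ heats').symm
    · exfalso
      have hr1 : E.rem j s ≤ E.rem j (σ ((j : ℕ))) :=
        rem_antitone E j (hσnonneg _) (le_of_lt hgt)
      have hr2 : 0 < E.rem j s :=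
        ((eats_iff' E i1 s (le_of_lt hs0) j).mp hseats).1
      linarith
  · -- item 0: exactly 1/2
    intro j hj0
    have hjit : j = it 0 := Fin.ext (by rw [hj0, hit0])
    subst hjit
    have halloc := alloc_eq E i1 (it 0) (a := (0 : ℝ)) (b := σ (H - 1))
      (hσnonneg _) F hFc
      (by
        rintro s ⟨hsIoo, hsF⟩
        refine ⟨hsIoo.1, ?_⟩
        obtain ⟨k', hk'1, hk'2, hk'3, hk'4⟩ := covering hΔpos (H - 1) s hsIoo.1
          (by rw [← hσeq]; exact le_of_lt hsIoo.2)
        rcases eq_or_lt_of_le hk'4 with heq | hlt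
        · exact absurd (heq ▸ hσmem k') hsF
        · exact heatsA k' hk'1 hk'2 s (by rw [hσeq]; exact hk'3) (by rw [hσeq]; exact hlt))
      (by
        rintro s ⟨hs0, hseats⟩
        rcases lt_or_ge s (σ (H - 1)) with hlt | hge
        · exact Or.inl ⟨hs0, hlt⟩
        · rcases eq_or_lt_of_le hge with heq | hgt
          · exact Or.inr (heq.symm ▸ hσmem (H - 1))
          · exfalso
            have hr1 : E.rem (it 0) s ≤ E.rem (it 0) (σ (H - 1)) :=
              rem_antitone E (it 0) (hσnonneg _) (le_of_lt hgt)
            have hr2 : 0 < E.rem (it 0) s :=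
              ((eats_iff' E i1 s (le_of_lt hs0) (it 0)).mp hseats).1
            rw [hrem0] at hr1
            linarith)
    rw [halloc, hσH1]
    ring

end PSAux

/-- tight example, manipulation: `n = m` even, `n ≥ 8`; agent 2 reports
`o₁ ≻ o₂ ≻ ⋯ ≻ oₙ`, agents `3, …, n` report `o₂ ≻ ⋯ ≻ oₙ ≻ o₁`, and agent 1 misreports
`o₂ ≻ o₃ ≻ ⋯ ≻ o_{n/2-1} ≻ o₁ ≻ o_{n/2} ≻ ⋯ ≻ oₙ` (items indexed so that `o_k` has index
`k - 1`).  Then agent 1 receives `1/(n-1)` of each of `o₂, …, o_{n/2-1}` and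
`(n+2)/(4(n-1))` of `o₁`; with dichotomous utilities on `O̅ = {o₁, …, o_{n/2-1}}` the
misreport yields utility `3(n-2)/(4(n-1))` while the truthful utility is `1/2`, giving the
ratio `3(n-2)/(2(n-1))`. -/
theorem tight_example_manipulation
    (n : ℕ) (hn : 8 ≤ n) (hne : Even n)
    (rk rk' : Fin n → Fin n → ℕ)
    (i1 : Fin n) (hi1 : (i1 : ℕ) = 0)
    (hrk12 : ∀ i : Fin n, (i : ℕ) ≤ 1 → ∀ j : Fin n, rk i j = (j : ℕ))
    (hrkrest : ∀ i : Fin n, 2 ≤ (i : ℕ) → ∀ j : Fin n,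
        rk i j = if (j : ℕ) = 0 then n else (j : ℕ))
    (hrk'1 : ∀ j : Fin n, rk' i1 j =
        if (j : ℕ) = 0 then n / 2 - 2
        else if (j : ℕ) ≤ n / 2 - 2 then (j : ℕ) - 1 else (j : ℕ))
    (hsame : ∀ i : Fin n, i ≠ i1 → rk' i = rk i)
    (E : PSExec n n rk (fun _ _ => True))
    (E' : PSExec n n rk' (fun _ _ => True)) :
    (∀ j : Fin n, 1 ≤ (j : ℕ) → (j : ℕ) ≤ n / 2 - 2 →
        E'.alloc i1 j = 1 / ((n : ℝ) - 1)) ∧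
    E'.alloc i1 ⟨0, by omega⟩ = ((n : ℝ) + 2) / (4 * ((n : ℝ) - 1)) ∧
    E'.utility (dicho (Finset.univ.filter (fun j : Fin n => (j : ℕ) ≤ n / 2 - 2))) i1
      = 3 * ((n : ℝ) - 2) / (4 * ((n : ℝ) - 1)) ∧
    E.utility (dicho (Finset.univ.filter (fun j : Fin n => (j : ℕ) ≤ n / 2 - 2))) i1
      = 1 / 2 ∧
    E'.utility (dicho (Finset.univ.filter (fun j : Fin n => (j : ℕ) ≤ n / 2 - 2))) i1 /
        E.utility (dicho (Finset.univ.filter (fun j : Fin n => (j : ℕ) ≤ n / 2 - 2))) i1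
      = 3 * ((n : ℝ) - 2) / (2 * ((n : ℝ) - 1)) := by
  classical
  have hOn : 2 ≤ n := by omega
  -- rk' for the non-manipulating agents
  have h2' : ∀ i : Fin n, (i : ℕ) = 1 → ∀ j : Fin n, rk' i j = (j : ℕ) := by
    intro i hiv j
    have hne : i ≠ i1 := fun hc => by rw [hc, hi1] at hiv; omega
    rw [hsame i hne]
    exact hrk12 i (by omega) j
  have h3' : ∀ i : Fin n, 2 ≤ (i : ℕ) → ∀ j : Fin n,
      rk' i j = if (j : ℕ) = 0 then n else (j : ℕ) := by
    intro i hiv j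
    have hne : i ≠ i1 := fun hc => by rw [hc, hi1] at hiv; omega
    rw [hsame i hne]
    exact hrkrest i hiv j
  obtain ⟨hmr1, hmr0⟩ := PSAux.misreport hn hne i1 hi1 hrk'1 h2' h3' E'
  obtain ⟨htr1, htr0⟩ := PSAux.truth hn hne i1 hi1 hrk12 hrkrest E
  have hnR : (8 : ℝ) ≤ (n : ℝ) := by exact_mod_cast hn
  have hH : n = 2 * (n / 2) := by obtain ⟨r, hr⟩ := hne; omega
  have hcastH : ((n / 2 - 2 : ℕ) : ℝ) = (n : ℝ) / 2 - 2 := by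
    have h4 : 4 ≤ n / 2 := by omega
    rw [Nat.cast_sub (by omega)]
    push_cast
    have : ((n / 2 : ℕ) : ℝ) = (n : ℝ) / 2 := by
      rw [eq_div_iff (by norm_num : (2:ℝ) ≠ 0)]
      exact_mod_cast (by omega : n / 2 * 2 = n)
    rw [this]
  have hu' : E'.utility (dicho (Finset.univ.filter (fun j : Fin n => (j : ℕ) ≤ n / 2 - 2))) i1
      = 3 * ((n : ℝ) - 2) / (4 * ((n : ℝ) - 1)) := by
    rw [PSAux.utility_calc hn E' i1 (((n : ℝ) + 2) / (4 * ((n : ℝ) - 1))) (1 / ((n : ℝ) - 1))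
      hmr0 hmr1, hcastH]
    have hne1 : (n : ℝ) - 1 ≠ 0 := by linarith
    field_simp
    ring
  have hu : E.utility (dicho (Finset.univ.filter (fun j : Fin n => (j : ℕ) ≤ n / 2 - 2))) i1
      = 1 / 2 := by
    rw [PSAux.utility_calc hn E i1 (1 / 2) 0 htr0 htr1]
    ring
  refine ⟨hmr1, hmr0 ⟨0, by omega⟩ rfl, hu', hu, ?_⟩
  rw [hu', hu]
  have hne1 : (n : ℝ) - 1 ≠ 0 := by linarith
  field_simp
  ring
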